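/- The settling time function S is unbounded: for every M ∈ ℕ there exists a positive integer x with S(x) > M (equivalently, limsup_{x→∞} S(x) = ∞). -/

import Mathlib

open scoped Classical

/-- The largest element of ℙ*₁ = ℙ* ∪ {1} (prime-powers together with 1) not exceeding `x`. -/
noncomputable def q (x : ℕ) : ℕ :=
  sSup {m : ℕ | (IsPrimePow m ∨ m = 1) ∧ m ≤ x}

/-- The prime-power map. -/
noncomputable def P (x : ℕ) : ℕ :=
  if x = 1 then 1
  else if IsPrimePow x then x / x.minFac
  else x - q x

/-- The orbit of `x` under `P`: `orbit x 1 = x` and `orbit x (n+1) = P (orbit x n)`. -/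
noncomputable def orbit (x n : ℕ) : ℕ := P^[n - 1] x

/-- The transient length `T x = min {n ≥ 1 : x_n = 1}`. -/
noncomputable def T (x : ℕ) : ℕ := sInf {n : ℕ | 1 ≤ n ∧ orbit x n = 1}

/-- The settling time `S x = min {n ≥ 1 : x_n ∈ ℙ*₁}`. -/
noncomputable def S (x : ℕ) : ℕ :=
  sInf {n : ℕ | 1 ≤ n ∧ (IsPrimePow (orbit x n) ∨ orbit x n = 1)}

lemma q_mem {x : ℕ} (hx : 1 ≤ x) : (IsPrimePow (q x) ∨ q x = 1) ∧ q x ≤ x := by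
  have h1 : (1:ℕ) ∈ {m : ℕ | (IsPrimePow m ∨ m = 1) ∧ m ≤ x} := ⟨Or.inr rfl, hx⟩
  have hbdd : BddAbove {m : ℕ | (IsPrimePow m ∨ m = 1) ∧ m ≤ x} := ⟨x, fun m hm => hm.2⟩
  exact Nat.sSup_mem ⟨1, h1⟩ hbdd

lemma le_q {x m : ℕ} (hm : IsPrimePow m ∨ m = 1) (hmx : m ≤ x) : m ≤ q x :=
  le_csSup ⟨x, fun m hm => hm.2⟩ ⟨hm, hmx⟩

lemma P_lt {x : ℕ} (hx : 2 ≤ x) : P x < x := by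
  have hx1 : x ≠ 1 := by omega
  rw [P, if_neg hx1]
  split_ifs with h
  · exact Nat.div_lt_self (by omega) (Nat.minFac_prime hx1).one_lt
  · have : 1 ≤ q x := le_q (Or.inr rfl) (by omega)
    omega

lemma P_pos {x : ℕ} (hx : 1 ≤ x) : 1 ≤ P x := by
  rcases eq_or_lt_of_le hx with h | h
  · rw [P, if_pos h.symm]
  · have hx1 : x ≠ 1 := by omega
    rw [P, if_neg hx1]
    split_ifs with h2
    · exact Nat.div_pos (Nat.minFac_le (by omega)) (Nat.minFac_pos x)
    · have hq := q_mem (by omega : 1 ≤ x)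
      have hne : q x ≠ x := by
        intro he
        rcases hq.1 with hh | hh
        · exact h2 (he ▸ hh)
        · omega
      omega

lemma exists_iter_one (x : ℕ) (hx : 1 ≤ x) : ∃ n, P^[n] x = 1 := by
  induction x using Nat.strong_induction_on with
  | _ x ih =>
    rcases eq_or_lt_of_le hx with h | h
    · exact ⟨0, h.symm⟩
    · obtain ⟨n, hn⟩ := ih (P x) (P_lt h) (P_pos (by omega))
      exact ⟨n + 1, by rw [Function.iterate_succ_apply, hn]⟩

lemma succ_mul_le {p a : ℕ} (hp : 2 ≤ p) (ha : 1 ≤ a) : (a + 1) * p ≤ 2 * p ^ a := by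
  have h1 : a + 1 ≤ 2 ^ a := Nat.lt_two_pow_self
  have h2 : 2 ^ a ≤ 2 * p ^ (a - 1) := by
    calc 2 ^ a = 2 * 2 ^ (a - 1) := by
          rw [← pow_succ']; congr 1; omega
      _ ≤ 2 * p ^ (a - 1) := by
          exact Nat.mul_le_mul_left 2 (Nat.pow_le_pow_left hp _)
  calc (a + 1) * p ≤ 2 * p ^ (a - 1) * p := Nat.mul_le_mul_right p (h1.trans h2)
    _ = 2 * p ^ a := by rw [mul_assoc, ← pow_succ]; congr 2; omega

lemma not_isPrimePow_factorial_add {N j : ℕ} (h2 : 2 ≤ j) (hjN : j ≤ N) :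
    ¬ IsPrimePow ((2 * N).factorial + j) := by
  intro hpp
  rw [isPrimePow_nat_iff] at hpp
  obtain ⟨p, k, hp, hk, hm⟩ := hpp
  set F := (2 * N).factorial with hF
  -- p divides j
  have hr : j.minFac.Prime := Nat.minFac_prime (by omega)
  have hrj : j.minFac ∣ j := Nat.minFac_dvd j
  have hrF : j.minFac ∣ F := Nat.dvd_factorial hr.pos ((Nat.le_of_dvd (by omega) hrj).trans (by omega))
  have hrm : j.minFac ∣ p ^ k := hm ▸ Dvd.dvd.add hrF hrj
  have hrp : j.minFac = p := by
    have := hr.dvd_of_dvd_pow hrm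
    exact (Nat.prime_dvd_prime_iff_eq hr hp).mp this
  have hpj : p ∣ j := hrp ▸ hrj
  have hp2 : 2 ≤ p := hp.two_le
  set a := j.factorization p with ha
  have ha1 : 1 ≤ a := by
    rw [ha, ← Nat.Prime.pow_dvd_iff_le_factorization hp (by omega : j ≠ 0), pow_one]
    exact hpj
  have hpa_dvd : p ^ a ∣ j := Nat.ordProj_dvd j p
  have hpaN : p ^ a ≤ N := (Nat.le_of_dvd (by omega) hpa_dvd).trans hjN
  -- p^(a+1) ∣ F
  have hNfac : p ^ a ∣ N.factorial :=
    Nat.dvd_factorial (Nat.pow_pos (n := a) (by omega)) hpaN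
  have hNN : N.factorial * N.factorial ∣ F := by
    have := Nat.choose_mul_factorial_mul_factorial (by omega : N ≤ 2 * N)
    have h2N : (2 * N - N) = N := by omega
    rw [h2N] at this
    exact ⟨(2 * N).choose N, by rw [hF, ← this]; ring⟩
  have hpaF : p ^ (a + 1) ∣ F := by
    refine dvd_trans ?_ hNN
    have : p ^ (a + 1) ∣ p ^ a * p ^ a := by
      rw [← pow_add]; exact pow_dvd_pow p (by omega)
    exact this.trans (mul_dvd_mul hNfac hNfac)
  -- a < k
  have hFN : N < F + j := by
    have : 2 * N ≤ F := Nat.self_le_factorial (2 * N)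
    omega
  have hak : a < k := by
    have hlt : p ^ a < p ^ k := by
      rw [hm]; exact lt_of_le_of_lt hpaN hFN
    exact (Nat.pow_lt_pow_iff_right (by omega : 1 < p)).mp hlt
  have hpam : p ^ (a + 1) ∣ p ^ k := pow_dvd_pow p (by omega)
  have hpaj : p ^ (a + 1) ∣ j := by
    have : j = p ^ k - F := by omega
    rw [this]
    exact Nat.dvd_sub hpam hpaF
  exact Nat.pow_succ_factorization_not_dvd (by omega : j ≠ 0) hp hpaj

/-- Every positive integer has a non-prime-power preimage under `P`. -/
lemma preimage (y : ℕ) (hy : 1 ≤ y) : ∃ x, 2 ≤ x ∧ ¬ IsPrimePow x ∧ P x = y := by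
  set N := y + 2 with hN
  set F := (2 * N).factorial with hF
  have hF2 : 2 ≤ F := by
    have : 2 * N ≤ F := Nat.self_le_factorial (2 * N)
    omega
  set Q := q (F + 1) with hQ
  have hQ2 : 2 ≤ Q := le_q (Or.inl Nat.prime_two.isPrimePow) (by omega)
  have hQmem := q_mem (by omega : 1 ≤ F + 1)
  have hQpp : IsPrimePow Q := by
    rcases hQmem.1 with h | h
    · exact h
    · omega
  have hQle : Q ≤ F + 1 := hQmem.2
  set x := Q + y with hx
  have hxle : x ≤ F + N - 1 := by omega
  -- no prime power in (Q, x]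
  have hgap : ∀ m, Q < m → m ≤ x → ¬ IsPrimePow m := by
    intro m hm1 hm2 hmp
    rcases le_or_gt m (F + 1) with h | h
    · have : m ≤ Q := le_q (Or.inl hmp) h
      omega
    · have hj2 : 2 ≤ m - F := by omega
      have hjN : m - F ≤ N := by omega
      have := not_isPrimePow_factorial_add hj2 hjN
      rw [← hF] at this
      have hmeq : F + (m - F) = m := by omega
      rw [hmeq] at this
      exact this hmp
  have hxpp : ¬ IsPrimePow x := hgap x (by omega) le_rfl
  have hqx : q x = Q := by
    have h1 : Q ≤ q x := le_q (Or.inl hQpp) (by omega)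
    have h2 : q x ≤ Q := by
      by_contra hcon
      push_neg at hcon
      have hmem := q_mem (by omega : 1 ≤ x)
      have hqpp : IsPrimePow (q x) := by
        rcases hmem.1 with h | h
        · exact h
        · omega
      exact hgap (q x) hcon hmem.2 hqpp
    omega
  refine ⟨x, by omega, hxpp, ?_⟩
  rw [P, if_neg (by omega : x ≠ 1), if_neg hxpp, hqx]
  omega

lemma main_aux (M : ℕ) :
    ∃ x, 1 ≤ x ∧ ∀ n, 1 ≤ n → n ≤ M → ¬ (IsPrimePow (orbit x n) ∨ orbit x n = 1) := by
  induction M with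
  | zero => exact ⟨1, le_refl 1, fun n h1 h0 => absurd (h1.trans h0) (by norm_num)⟩
  | succ M ih =>
    obtain ⟨x₀, hx₀, hprop⟩ := ih
    obtain ⟨x, hx2, hxpp, hPx⟩ := preimage x₀ hx₀
    refine ⟨x, by omega, fun n h1 hn => ?_⟩
    rcases eq_or_lt_of_le h1 with h | h
    · have hx1 : orbit x n = x := by
        rw [← h]; simp [orbit]
      rw [hx1]
      rintro (hh | hh)
      · exact hxpp hh
      · omega
    · have horb : orbit x n = orbit x₀ (n - 1) := by
        unfold orbit
        have h1' : n - 1 = (n - 2) + 1 := by omega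
        have h2' : n - 1 - 1 = n - 2 := by omega
        rw [h1', Function.iterate_succ_apply, hPx, Nat.add_sub_cancel]
      rw [horb]
      exact hprop (n - 1) (by omega) (by omega)

theorem stmt_5 (M : ℕ) : ∃ x : ℕ, 0 < x ∧ M < S x := by
  obtain ⟨x, hx, hprop⟩ := main_aux M
  refine ⟨x, hx, ?_⟩
  have hne : {n : ℕ | 1 ≤ n ∧ (IsPrimePow (orbit x n) ∨ orbit x n = 1)}.Nonempty := by
    obtain ⟨n, hn⟩ := exists_iter_one x hx
    refine ⟨n + 1, by omega, Or.inr ?_⟩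
    simpa [orbit] using hn
  have hmem := Nat.sInf_mem hne
  by_contra hle
  push_neg at hle
  exact hprop (S x) hmem.1 hle hmem.2
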